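/- Define 𝒥(q) := (1/I₀(q))·Σ_{d≥0} q^d · (Π_{j=1}^{5d}(5H + jz − t)) / (Π_{k=1}^{d}(H + kz)⁵), an element of (ℚ(t,z)[H]/(H⁵))[[q]] (each (H + kz)^{−1} expanded as a polynomial in H over ℚ(t,z) using H⁵ = 0); this is I(t,q,z)/(z·I₀). Apply the operator f ↦ (1/I_{1,1})·( z·q·∂f/∂q + H·f − I_{1,1;a}·t·f ) to 𝒥 and then substitute z := t − 5H (legitimate since each H + k(t − 5H) = kt + (1−5k)H is invertible in ℚ(t)[H]/(H⁵)). The result equals (L/(I₀·I_{1,1}))·( (L⁴ + 5𝒳)·H − (L⁴/5 + 𝒬 + 𝒳)·t ) in (ℚ(t)[H]/(H⁵))[[q]]. (This is the explicit closed formula for the first column S̄₁ = S*(z)(H)|_{z = t−5H} of the modified S-matrix of the twisted theory, obtained by Birkhoff factorization from the I-function.) -/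

import Mathlib

noncomputable section

open LaurentPolynomial

/-! ### Scalar power series -/

/-- The operator `q·d/dq` on formal power series in `q`. -/
def qd (f : PowerSeries ℚ) : PowerSeries ℚ :=
  PowerSeries.mk fun n => (n : ℚ) * PowerSeries.coeff n f

/-- `I₀(q) = Σ_{d≥0} ((5d)!/(d!)⁵) q^d`. -/
def I0 : PowerSeries ℚ :=
  PowerSeries.mk fun d => (Nat.factorial (5 * d) : ℚ) / ((Nat.factorial d : ℚ)) ^ 5

/-- `I₁(q) = Σ_{d≥1} ((5d)!/(d!)⁵)(5 Σ_{j=d+1}^{5d} 1/j) q^d`. -/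
def I1 : PowerSeries ℚ :=
  PowerSeries.mk fun d =>
    (Nat.factorial (5 * d) : ℚ) / ((Nat.factorial d : ℚ)) ^ 5 *
      (5 * ∑ j ∈ Finset.Icc (d + 1) (5 * d), (1 : ℚ) / j)

/-- `I_{1,1} = 1 + q·d/dq (I₁/I₀)`. -/
def I11 : PowerSeries ℚ := 1 + qd (I1 * I0⁻¹)

/-- `I_{1;a}(q) = -Σ_{d≥1} ((5d)!/(d!)⁵)(Σ_{j=1}^{5d} 1/j) q^d`. -/
def I1a : PowerSeries ℚ :=
  PowerSeries.mk fun d =>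
    -((Nat.factorial (5 * d) : ℚ) / ((Nat.factorial d : ℚ)) ^ 5 *
      ∑ j ∈ Finset.Icc 1 (5 * d), (1 : ℚ) / j)

/-- `I_{1,1;a} = q·d/dq (I_{1;a}/I₀)`. -/
def I11a : PowerSeries ℚ := qd (I1a * I0⁻¹)

/-- The generator `𝒳 = (1/L)(q I₀'/I₀ − q L'/L)`. -/
def Xgen (L : PowerSeries ℚ) : PowerSeries ℚ :=
  L⁻¹ * (qd I0 * I0⁻¹ - qd L * L⁻¹)

/-- The extra generator `𝒬 = (1/L)(I_{1,1;a} − 1/5)`. -/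
def Qgen (L : PowerSeries ℚ) : PowerSeries ℚ :=
  L⁻¹ * (I11a - PowerSeries.C (1 / 5 : ℚ))

/-! ### The coefficient rings `ℚ(t)[H]/(H⁵)` and its Laurent extension in `z` -/

/-- The field `ℚ(t)` of rational functions in `t`. -/
abbrev F : Type := RatFunc ℚ

/-- The ring `ℚ(t)[H]/(H⁵)`. -/
abbrev Aring : Type := Polynomial F ⧸ Ideal.span ({Polynomial.X ^ 5} : Set (Polynomial F))

/-- The class `H`. -/
def HA : Aring := Ideal.Quotient.mk _ Polynomial.X

/-- The element `t`. -/
def tA : Aring := algebraMap F Aring RatFunc.X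

/-- The ring `(ℚ(t)[H]/(H⁵))[z, z⁻¹]`, in which the coefficients of the twisted
`I`-function live (each coefficient is a Laurent polynomial in `z`). -/
abbrev RA : Type := LaurentPolynomial Aring

/-- The variable `z`. -/
def zR : RA := T 1

/-- `H` viewed in `RA`. -/
def HR : RA := LaurentPolynomial.C HA

/-- `t` viewed in `RA`. -/
def tR : RA := LaurentPolynomial.C tA

/-- The expansion of `(H + kz)⁻¹` as `Σ_{i=0}^{4} (−1)^i H^i (kz)^{−i−1}` (using `H⁵ = 0`). -/
def Einv (k : ℕ) : RA :=
  ∑ i ∈ Finset.range 5,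
    (-1 : RA) ^ i * HR ^ i * algebraMap ℚ RA (1 / (k : ℚ) ^ (i + 1)) * T (-(i + 1) : ℤ)

/-- Embedding of scalar power series into `RA[[q]]`. -/
def eR : PowerSeries ℚ →+* PowerSeries RA := PowerSeries.map (algebraMap ℚ RA)

/-- Embedding of scalar power series into `Aring[[q]]`. -/
def eA : PowerSeries ℚ →+* PowerSeries Aring := PowerSeries.map (algebraMap ℚ Aring)

/-- `𝒥(q) = (1/I₀)·Σ_{d≥0} q^d (Π_{j=1}^{5d}(5H + jz − t)) / (Π_{k=1}^{d}(H + kz)⁵)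
  = I(t,q,z)/(z·I₀)`. -/
def Jfun : PowerSeries RA :=
  eR I0⁻¹ *
    PowerSeries.mk fun d =>
      (∏ j ∈ Finset.Icc 1 (5 * d), (5 * HR + (j : RA) * zR - tR))
        * ∏ k ∈ Finset.Icc 1 d, (Einv k) ^ 5

/-- The Birkhoff-factorization operator
`f ↦ (1/I_{1,1})·( z·q·∂f/∂q + H·f − I_{1,1;a}·t·f )`. -/
def Op (f : PowerSeries RA) : PowerSeries RA :=
  eR I11⁻¹ *
    ((PowerSeries.mk fun n => (n : RA) * zR * PowerSeries.coeff n f)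
      + PowerSeries.C HR * f - eR I11a * PowerSeries.C tR * f)

/-- `t − 5H` is a unit in `ℚ(t)[H]/(H⁵)` (explicit geometric-series inverse). -/
def uSub : Aringˣ :=
  letI w : Aring := algebraMap F Aring (RatFunc.X)⁻¹
  { val := tA - 5 * HA
    inv := w + 5 * HA * w ^ 2 + 25 * HA ^ 2 * w ^ 3 + 125 * HA ^ 3 * w ^ 4
      + 625 * HA ^ 4 * w ^ 5
    val_inv := by
      have htw : tA * (algebraMap F Aring (RatFunc.X)⁻¹) = 1 := by
        rw [tA, ← map_mul, mul_inv_cancel₀ RatFunc.X_ne_zero, map_one]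
      have h5 : HA ^ 5 = 0 := by
        rw [HA, ← map_pow, Ideal.Quotient.eq_zero_iff_mem]
        exact Ideal.subset_span (Set.mem_singleton _)
      set w : Aring := algebraMap F Aring (RatFunc.X)⁻¹ with hw
      linear_combination (1 + 5 * HA * w + 25 * HA ^ 2 * w ^ 2 + 125 * HA ^ 3 * w ^ 3
          + 625 * HA ^ 4 * w ^ 4) * htw - 3125 * w ^ 5 * h5
    inv_val := by
      have htw : tA * (algebraMap F Aring (RatFunc.X)⁻¹) = 1 := by
        rw [tA, ← map_mul, mul_inv_cancel₀ RatFunc.X_ne_zero, map_one]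
      have h5 : HA ^ 5 = 0 := by
        rw [HA, ← map_pow, Ideal.Quotient.eq_zero_iff_mem]
        exact Ideal.subset_span (Set.mem_singleton _)
      set w : Aring := algebraMap F Aring (RatFunc.X)⁻¹ with hw
      linear_combination (1 + 5 * HA * w + 25 * HA ^ 2 * w ^ 2 + 125 * HA ^ 3 * w ^ 3
          + 625 * HA ^ 4 * w ^ 4) * htw - 3125 * w ^ 5 * h5 }

/-- The substitution homomorphism `z ↦ t − 5H`, an `Aring`-algebra map
`(ℚ(t)[H]/(H⁵))[z,z⁻¹] → ℚ(t)[H]/(H⁵)`. -/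
def subst : RA →ₐ[Aring] Aring :=
  AddMonoidAlgebra.lift Aring Aring ℤ ((Units.coeHom Aring).comp (zpowersHom Aringˣ uSub))

/-! ### Auxiliary lemmas -/

theorem qd_mul (f g : PowerSeries ℚ) : qd (f * g) = qd f * g + f * qd g := by
  ext n
  simp only [qd, PowerSeries.coeff_mk, PowerSeries.coeff_mul, map_add, Finset.mul_sum,
    PowerSeries.coeff_mk, ← Finset.sum_add_distrib]
  refine Finset.sum_congr rfl fun p hp => ?_
  rw [Finset.HasAntidiagonal.mem_antidiagonal] at hp
  have : (n : ℚ) = (p.1 : ℚ) + p.2 := by exact_mod_cast hp.symm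
  rw [this]; ring

theorem qd_one : qd 1 = 0 := by
  ext n
  simp only [qd, PowerSeries.coeff_mk, PowerSeries.coeff_one]
  split_ifs with h <;> simp [h]

theorem qd_C (r : ℚ) : qd (PowerSeries.C r) = 0 := by
  ext n
  simp only [qd, PowerSeries.coeff_mk, PowerSeries.coeff_C]
  split_ifs with h <;> simp [h]

theorem qd_sub (f g : PowerSeries ℚ) : qd (f - g) = qd f - qd g := by
  ext n; simp [qd, mul_sub]

theorem qd_X : qd PowerSeries.X = PowerSeries.X := by
  ext n
  simp only [qd, PowerSeries.coeff_mk, PowerSeries.coeff_X]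
  split_ifs with h <;> simp [h]

theorem five_C : (5 : PowerSeries ℚ) = PowerSeries.C (5:ℚ) := (map_ofNat (PowerSeries.C (R := ℚ)) 5).symm

theorem key (L : PowerSeries ℚ)
    (hL : L ^ 5 * (1 - 5 ^ 5 * PowerSeries.X) = 1) :
    5 * qd L = L ^ 6 - L := by
  have h0 : qd (L ^ 5 * (1 - 5 ^ 5 * PowerSeries.X)) = 0 := by rw [hL, qd_one]
  have hpow : qd (L ^ 5) = 5 * L ^ 4 * qd L := by
    have e : L ^ 5 = L * (L * (L * (L * L))) := by ring
    rw [e, qd_mul, qd_mul, qd_mul, qd_mul]; ring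
  have hlin : qd (1 - 5 ^ 5 * PowerSeries.X) = -(5 ^ 5) * PowerSeries.X := by
    rw [qd_sub, qd_one, show ((5:PowerSeries ℚ) ^ 5) = PowerSeries.C ((5:ℚ) ^ 5) by
      rw [five_C, ← map_pow], qd_mul, qd_C, qd_X, show PowerSeries.C ((5:ℚ)^5) = ((5:PowerSeries ℚ)^5) by
      rw [five_C, ← map_pow]]
    ring
  rw [qd_mul, hpow, hlin] at h0
  linear_combination L * h0 - 5 * qd L * hL - L * hL

theorem constCoeff_I0 : PowerSeries.constantCoeff I0 = 1 := by
  simp [I0, PowerSeries.constantCoeff_mk, Nat.factorial]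

theorem constCoeff_qd (f : PowerSeries ℚ) : PowerSeries.constantCoeff (qd f) = 0 := by
  simp [qd, PowerSeries.constantCoeff_mk]

theorem constCoeff_I11 : PowerSeries.constantCoeff I11 = 1 := by
  simp [I11, constCoeff_qd]

theorem hI0u : I0 * I0⁻¹ = 1 :=
  PowerSeries.mul_inv_cancel _ (by rw [constCoeff_I0]; exact one_ne_zero)

theorem hI11u : I11 * I11⁻¹ = 1 :=
  PowerSeries.mul_inv_cancel _ (by rw [constCoeff_I11]; exact one_ne_zero)

theorem hqa : qd I0⁻¹ = -(qd I0) * I0⁻¹ ^ 2 := by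
  have h0 : qd (I0 * I0⁻¹) = 0 := by rw [hI0u, qd_one]
  rw [qd_mul] at h0
  linear_combination I0⁻¹ * h0 - qd I0⁻¹ * hI0u

theorem mul5 : (5 : PowerSeries ℚ) * PowerSeries.C (1 / 5 : ℚ) = 1 := by
  rw [five_C, ← map_mul, ← map_one (PowerSeries.C (R := ℚ))]
  norm_num

theorem scalarA (L : PowerSeries ℚ)
    (hc : PowerSeries.constantCoeff L = 1)
    (hL : L ^ 5 * (1 - 5 ^ 5 * PowerSeries.X) = 1) :
    I11⁻¹ * (I0⁻¹ - 5 * qd I0⁻¹) = L * (I0 * I11)⁻¹ * (L ^ 4 + 5 * Xgen L) := by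
  have h3 : L * L⁻¹ = 1 := PowerSeries.mul_inv_cancel _ (by rw [hc]; exact one_ne_zero)
  have hk := key L hL
  rw [PowerSeries.mul_inv_rev, Xgen]
  linear_combination (-5 * I11⁻¹) * hqa
    + I0⁻¹ * I11⁻¹ * (-5 * qd I0 * I0⁻¹ + (L * L⁻¹ + 1) * (L ^ 5 - 1)) * h3
    + I0⁻¹ * I11⁻¹ * L * L⁻¹ ^ 2 * hk

theorem scalarB (L : PowerSeries ℚ)
    (hc : PowerSeries.constantCoeff L = 1)
    (hL : L ^ 5 * (1 - 5 ^ 5 * PowerSeries.X) = 1) :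
    I11⁻¹ * (I11a * I0⁻¹ - qd I0⁻¹) =
      L * (I0 * I11)⁻¹ * (PowerSeries.C (1 / 5 : ℚ) * L ^ 4 + Qgen L + Xgen L) := by
  have h3 : L * L⁻¹ = 1 := PowerSeries.mul_inv_cancel _ (by rw [hc]; exact one_ne_zero)
  have hk := key L hL
  rw [PowerSeries.mul_inv_rev, Xgen, Qgen]
  linear_combination (-I11⁻¹) * hqa
    + I0⁻¹ * I11⁻¹ * (-(I11a + qd I0 * I0⁻¹)
        + PowerSeries.C (1 / 5 : ℚ) * (1 + (L * L⁻¹ + 1) * (L ^ 5 - 1))) * h3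
    + I0⁻¹ * I11⁻¹ * PowerSeries.C (1 / 5 : ℚ) * L * L⁻¹ ^ 2 * hk
    - I0⁻¹ * I11⁻¹ * L * qd L * L⁻¹ ^ 2 * mul5

theorem subst_C (a : Aring) : (subst : RA →+* Aring) (LaurentPolynomial.C a) = a := by
  have h := subst.commutes a
  rw [Algebra.algebraMap_self, RingHom.id_apply] at h
  rw [LaurentPolynomial.C_eq_algebraMap]
  exact h

theorem subst_H : (subst : RA →+* Aring) HR = HA := subst_C HA

theorem subst_t : (subst : RA →+* Aring) tR = tA := subst_C tA

theorem subst_z : (subst : RA →+* Aring) zR = tA - 5 * HA := by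
  have h1 : subst zR
      = ((Units.coeHom Aring).comp (zpowersHom Aringˣ uSub)) (Multiplicative.ofAdd (1 : ℤ)) := by
    rw [show zR = AddMonoidAlgebra.of' Aring ℤ 1 from rfl]
    exact AddMonoidAlgebra.lift_of' _ _
  have h2 : (subst : RA →+* Aring) zR = subst zR := rfl
  rw [h2, h1, MonoidHom.comp_apply, zpowersHom_apply, toAdd_ofAdd, zpow_one,
    Units.coeHom_apply]
  rfl

theorem subst_ratCast (x : ℚ) :
    (subst : RA →+* Aring) (algebraMap ℚ RA x) = algebraMap ℚ Aring x := by
  have h : ((subst : RA →+* Aring)).comp (algebraMap ℚ RA) = algebraMap ℚ Aring :=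
    Subsingleton.elim _ _
  exact RingHom.congr_fun h x

theorem map_subst_eR (f : PowerSeries ℚ) :
    PowerSeries.map (subst : RA →+* Aring) (eR f) = eA f := by
  ext n
  rw [eR, eA, PowerSeries.coeff_map, PowerSeries.coeff_map, PowerSeries.coeff_map, subst_ratCast]

theorem subst_prod_eq_zero {d : ℕ} (hd : 1 ≤ d) :
    (subst : RA →+* Aring) (∏ j ∈ Finset.Icc 1 (5 * d), (5 * HR + (j : RA) * zR - tR)) = 0 := by
  rw [map_prod]
  refine Finset.prod_eq_zero (i := 1) (Finset.mem_Icc.mpr ⟨le_refl 1, by omega⟩) ?_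
  rw [map_sub, map_add, map_mul, map_mul, map_ofNat, map_natCast, subst_H, subst_t, subst_z]
  push_cast
  ring

theorem map_subst_J : PowerSeries.map (subst : RA →+* Aring) Jfun = eA I0⁻¹ := by
  rw [Jfun, map_mul, map_subst_eR]
  have h1 : PowerSeries.map (subst : RA →+* Aring)
      (PowerSeries.mk fun d =>
        (∏ j ∈ Finset.Icc 1 (5 * d), (5 * HR + (j : RA) * zR - tR))
          * ∏ k ∈ Finset.Icc 1 d, (Einv k) ^ 5) = 1 := by
    ext n
    rw [PowerSeries.coeff_map, PowerSeries.coeff_mk, PowerSeries.coeff_one]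
    cases n with
    | zero =>
      simp
    | succ n =>
      rw [if_neg (Nat.succ_ne_zero n), map_mul, subst_prod_eq_zero (by omega), zero_mul]
  rw [h1, mul_one]

theorem map_subst_M :
    PowerSeries.map (subst : RA →+* Aring)
        (PowerSeries.mk fun n => (n : RA) * zR * PowerSeries.coeff n Jfun) =
      PowerSeries.C (tA - 5 * HA) * eA (qd I0⁻¹) := by
  ext n
  rw [PowerSeries.coeff_map, PowerSeries.coeff_mk, map_mul, map_mul, map_natCast, subst_z,
    PowerSeries.coeff_C_mul]
  have h : (subst : RA →+* Aring) (PowerSeries.coeff n Jfun)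
      = PowerSeries.coeff n (PowerSeries.map (subst : RA →+* Aring) Jfun) := by
    rw [PowerSeries.coeff_map]
  rw [h, map_subst_J]
  simp only [eA, qd, PowerSeries.coeff_map, PowerSeries.coeff_mk, map_mul, map_natCast]
  ring

/-- Applying the operator
`f ↦ (1/I_{1,1})( z·q·∂f/∂q + H·f − I_{1,1;a}·t·f )` to `𝒥 = I(t,q,z)/(z·I₀)` and then
substituting `z := t − 5H` yields
`(L/(I₀·I_{1,1}))·( (L⁴ + 5𝒳)·H − (L⁴/5 + 𝒬 + 𝒳)·t )`.
This is the closed formula for the first column `S̄₁` of the modified `S`-matrix. -/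
theorem statement14 (L : PowerSeries ℚ)
    (hc : PowerSeries.constantCoeff L = 1)
    (hL : L ^ 5 * (1 - 5 ^ 5 * PowerSeries.X) = 1) :
    PowerSeries.map (subst : RA →+* Aring) (Op Jfun) =
      eA (L * (I0 * I11)⁻¹ * (L ^ 4 + 5 * Xgen L)) * PowerSeries.C HA
        - eA (L * (I0 * I11)⁻¹ * (PowerSeries.C (1 / 5 : ℚ) * L ^ 4 + Qgen L + Xgen L))
            * PowerSeries.C tA := by
  have h1 : PowerSeries.map (subst : RA →+* Aring) (Op Jfun) =
      eA I11⁻¹ * (PowerSeries.C (tA - 5 * HA) * eA (qd I0⁻¹)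
        + PowerSeries.C HA * eA I0⁻¹
        - eA I11a * PowerSeries.C tA * eA I0⁻¹) := by
    rw [Op]
    simp only [map_mul, map_add, map_sub, PowerSeries.map_C, map_subst_eR, map_subst_J,
      map_subst_M, subst_H, subst_t]
  rw [h1]
  have expand : eA (I11⁻¹ * (I0⁻¹ - 5 * qd I0⁻¹)) * PowerSeries.C HA
      - eA (I11⁻¹ * (I11a * I0⁻¹ - qd I0⁻¹)) * PowerSeries.C tA =
      eA I11⁻¹ * (PowerSeries.C (tA - 5 * HA) * eA (qd I0⁻¹)
        + PowerSeries.C HA * eA I0⁻¹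
        - eA I11a * PowerSeries.C tA * eA I0⁻¹) := by
    simp only [map_mul, map_sub, map_ofNat]
    ring
  rw [← expand, scalarA L hc hL, scalarB L hc hL]

end
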